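/- arXiv:1102.2072 — 3 statements merged into one kernel-verified Lean document; each statement's English description precedes it below -/
import Mathlib

section
/- Suppose the common distribution F of the X_i is continuous (atomless), and let n ≥ 2 and r > 0. If E|T_n|^r < ∞, then there exists a constant C > 0 such that q(h) ≤ C·h^{r/n} for all h ∈ (0,1]. -/
open MeasureTheory ProbabilityTheory Filter

noncomputable section

/-- The partial sum `S_n = ∑_{i=1}^n X_i`. -/
def Sn {Ω : Type*} (X : ℕ → Ω → ℝ) (n : ℕ) (ω : Ω) : ℝ :=
  ∑ i ∈ Finset.range n, X i ω

/-- `V_n = (∑_{i=1}^n X_i²)^{1/2}`. -/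
def Vn {Ω : Type*} (X : ℕ → Ω → ℝ) (n : ℕ) (ω : Ω) : ℝ :=
  Real.sqrt (∑ i ∈ Finset.range n, (X i ω) ^ 2)

/-- The sample variance `σ̂_n² = (1/(n-1)) ∑_{i=1}^n (X_i - S_n/n)²`. -/
def sigmaSq {Ω : Type*} (X : ℕ → Ω → ℝ) (n : ℕ) (ω : Ω) : ℝ :=
  (1 / ((n : ℝ) - 1)) * ∑ i ∈ Finset.range n, (X i ω - Sn X n ω / n) ^ 2

/-- Student's t-statistic `T_n = n^{-1/2} σ̂_n^{-1} S_n` when `σ̂_n > 0`, and `0` otherwise. -/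
def Tstat {Ω : Type*} (X : ℕ → Ω → ℝ) (n : ℕ) (ω : Ω) : ℝ :=
  if 0 < sigmaSq X n ω then Sn X n ω / (Real.sqrt n * Real.sqrt (sigmaSq X n ω)) else 0

/-- `U_n* = (S_n/V_n)²` if `V_n > 0` and `(S_n/V_n)² ≠ n`, and `U_n* = 0` otherwise. -/
def Ustar {Ω : Type*} (X : ℕ → Ω → ℝ) (n : ℕ) (ω : Ω) : ℝ :=
  if 0 < Vn X n ω ∧ (Sn X n ω / Vn X n ω) ^ 2 ≠ (n : ℝ) then (Sn X n ω / Vn X n ω) ^ 2 else 0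
lemma tstat_lower {Ω : Type*} (X : ℕ → Ω → ℝ) (n : ℕ) (hn : 2 ≤ n) (ω : Ω) (x h : ℝ)
    (hx : x ≠ 0) (hh : 0 < h) (hh2 : h ≤ 1/2)
    (hA : ∀ i ∈ Finset.range n, |X i ω - x| ≤ |x| * h)
    (hσ : 0 < sigmaSq X n ω) :
    1 / (4 * h) ≤ |Tstat X n ω| := by
  have hxpos : 0 < |x| := abs_pos.2 hx
  have hn2 : (2:ℝ) ≤ (n:ℝ) := by exact_mod_cast hn
  have hnpos : (0:ℝ) < n := by linarith
  set s := Sn X n ω with hs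
  -- Step 1
  have h1 : |s - n * x| ≤ n * (|x| * h) := by
    have e1 : s - n * x = ∑ i ∈ Finset.range n, (X i ω - x) := by
      rw [hs]; unfold Sn
      rw [Finset.sum_sub_distrib, Finset.sum_const, Finset.card_range, nsmul_eq_mul]
    rw [e1]
    calc |∑ i ∈ Finset.range n, (X i ω - x)| ≤ ∑ i ∈ Finset.range n, |X i ω - x| :=
          Finset.abs_sum_le_sum_abs _ _
      _ ≤ ∑ _i ∈ Finset.range n, (|x| * h) := Finset.sum_le_sum hA
      _ = n * (|x| * h) := by rw [Finset.sum_const, Finset.card_range, nsmul_eq_mul]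
  -- Step 2
  have h2 : n * |x| / 2 ≤ |s| := by
    have := abs_sub_abs_le_abs_sub ((n:ℝ) * x) s
    rw [abs_sub_comm, abs_mul, abs_of_pos hnpos] at this
    nlinarith [mul_le_mul_of_nonneg_left hh2 (mul_pos hnpos hxpos).le]
  -- Step 3
  have h3 : ∀ i ∈ Finset.range n, |X i ω - s / n| ≤ 2 * (|x| * h) := by
    intro i hi
    have e2 : X i ω - s / n = (X i ω - x) + (n * x - s) / n := by
      field_simp; ring
    rw [e2]
    have h4 : |(n * x - s) / n| ≤ |x| * h := by
      rw [abs_div, abs_of_pos hnpos, div_le_iff₀ hnpos, abs_sub_comm]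
      calc |s - n*x| ≤ n * (|x| * h) := h1
        _ = |x| * h * n := by ring
    calc |(X i ω - x) + ((n:ℝ) * x - s) / n| ≤ |X i ω - x| + |((n:ℝ) * x - s) / n| := abs_add_le _ _
      _ ≤ |x| * h + |x| * h := add_le_add (hA i hi) h4
      _ = 2 * (|x| * h) := by ring
  -- Step 4
  have h5 : sigmaSq X n ω ≤ 8 * (|x| * h)^2 := by
    have hsum : ∑ i ∈ Finset.range n, (X i ω - s / n) ^ 2 ≤ n * (2 * (|x| * h))^2 := by
      calc ∑ i ∈ Finset.range n, (X i ω - s / n) ^ 2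
          ≤ ∑ _i ∈ Finset.range n, (2 * (|x| * h))^2 := by
            apply Finset.sum_le_sum
            intro i hi
            rw [← sq_abs (X i ω - s / n)]
            exact pow_le_pow_left₀ (abs_nonneg _) (h3 i hi) 2
        _ = n * (2 * (|x| * h))^2 := by rw [Finset.sum_const, Finset.card_range, nsmul_eq_mul]
    have hpos : (0:ℝ) < (n:ℝ) - 1 := by linarith
    unfold sigmaSq
    rw [← hs]
    rw [one_div, ← div_eq_inv_mul, div_le_iff₀ hpos]
    nlinarith [sq_nonneg (|x| * h)]
  -- Step 5
  have h6 : Real.sqrt (sigmaSq X n ω) ≤ Real.sqrt 8 * (|x| * h) := by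
    have : Real.sqrt (sigmaSq X n ω) ≤ Real.sqrt (8 * (|x| * h)^2) := Real.sqrt_le_sqrt h5
    rwa [Real.sqrt_mul (by norm_num) _, Real.sqrt_sq (by positivity)] at this
  -- Step 6: sqrt 8 ≤ 2 sqrt n
  have h7 : Real.sqrt 8 ≤ 2 * Real.sqrt n := by
    have : Real.sqrt 8 ≤ Real.sqrt (4 * n) := Real.sqrt_le_sqrt (by linarith)
    rwa [Real.sqrt_mul (by norm_num) _, show Real.sqrt 4 = 2 by
      rw [show (4:ℝ) = 2^2 by norm_num, Real.sqrt_sq (by norm_num)]] at this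
  have hsqn : 0 < Real.sqrt n := Real.sqrt_pos.2 hnpos
  have hsqσ : 0 < Real.sqrt (sigmaSq X n ω) := Real.sqrt_pos.2 hσ
  have hD : Real.sqrt n * Real.sqrt (sigmaSq X n ω) ≤ |s| * (4 * h) := by
    calc Real.sqrt n * Real.sqrt (sigmaSq X n ω)
        ≤ Real.sqrt n * (Real.sqrt 8 * (|x| * h)) := by
          apply mul_le_mul_of_nonneg_left h6 hsqn.le
      _ ≤ Real.sqrt n * ((2 * Real.sqrt n) * (|x| * h)) := by
          apply mul_le_mul_of_nonneg_left _ hsqn.le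
          exact mul_le_mul_of_nonneg_right h7 (by positivity)
      _ = 2 * ((n:ℝ)) * |x| * h := by
          rw [show Real.sqrt (n:ℝ) * (2 * Real.sqrt (n:ℝ) * (|x| * h))
              = 2 * (Real.sqrt (n:ℝ) * Real.sqrt (n:ℝ)) * |x| * h by ring,
            Real.mul_self_sqrt hnpos.le]
      _ ≤ |s| * (4 * h) := by nlinarith
  unfold Tstat
  rw [if_pos hσ, ← hs, abs_div, abs_of_pos (mul_pos hsqn hsqσ)]
  rw [div_le_div_iff₀ (by positivity) (mul_pos hsqn hsqσ)]
  linarith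

lemma measurable_Sn {Ω : Type*} [MeasurableSpace Ω] (X : ℕ → Ω → ℝ)
    (hmeas : ∀ i, Measurable (X i)) (n : ℕ) : Measurable (Sn X n) :=
  Finset.measurable_sum _ (fun i _ => hmeas i)

lemma measurable_sigmaSq {Ω : Type*} [MeasurableSpace Ω] (X : ℕ → Ω → ℝ)
    (hmeas : ∀ i, Measurable (X i)) (n : ℕ) : Measurable (sigmaSq X n) := by
  unfold sigmaSq
  apply Measurable.const_mul
  exact Finset.measurable_sum _ (fun i _ =>
    ((hmeas i).sub ((measurable_Sn X hmeas n).div_const _)).pow_const 2)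

lemma eq_null {Ω : Type*} [MeasurableSpace Ω] (P : Measure Ω) [IsProbabilityMeasure P]
    (X : ℕ → Ω → ℝ) (hmeas : ∀ i, Measurable (X i))
    (hindep : iIndepFun X P)
    (μ : Measure ℝ) (hdist : ∀ i, P.map (X i) = μ) (hcont : ∀ x : ℝ, μ {x} = 0) :
    P {ω | X 0 ω = X 1 ω} = 0 := by
  have hμ : IsProbabilityMeasure μ := by
    rw [← hdist 0]; exact Measure.isProbabilityMeasure_map (hmeas 0).aemeasurable
  have hind : IndepFun (X 0) (X 1) P := hindep.indepFun (by norm_num)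
  have hmap : P.map (fun ω => (X 0 ω, X 1 ω)) = μ.prod μ := by
    rw [(ProbabilityTheory.indepFun_iff_map_prod_eq_prod_map_map
      (hmeas 0).aemeasurable (hmeas 1).aemeasurable).mp hind, hdist 0, hdist 1]
  have hD : MeasurableSet {p : ℝ × ℝ | p.1 = p.2} := by
    exact measurableSet_eq_fun measurable_fst measurable_snd
  have heq : P {ω | X 0 ω = X 1 ω} = (μ.prod μ) {p : ℝ × ℝ | p.1 = p.2} := by
    rw [← hmap, Measure.map_apply ((hmeas 0).prodMk (hmeas 1)) hD]
    rfl
  rw [heq, Measure.prod_apply hD]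
  have hz : ∀ a : ℝ, μ (Prod.mk a ⁻¹' {p : ℝ × ℝ | p.1 = p.2}) = 0 := by
    intro a
    have : Prod.mk a ⁻¹' {p : ℝ × ℝ | p.1 = p.2} = {a} := by
      ext y; simp [eq_comm]
    rw [this]; exact hcont a
  simp [hz, hcont]

lemma sigmaSq_zero_subset {Ω : Type*} (X : ℕ → Ω → ℝ) (n : ℕ) (hn : 2 ≤ n) :
    {ω | ¬ 0 < sigmaSq X n ω} ⊆ {ω | X 0 ω = X 1 ω} := by
  intro ω hω
  simp only [Set.mem_setOf_eq, not_lt] at hω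
  have hn2 : (2:ℝ) ≤ (n:ℝ) := by exact_mod_cast hn
  have hpos : (0:ℝ) < 1 / ((n:ℝ) - 1) := by
    apply div_pos one_pos; linarith
  have hsum : ∑ i ∈ Finset.range n, (X i ω - Sn X n ω / n) ^ 2 ≤ 0 := by
    by_contra hc
    push_neg at hc
    have : 0 < sigmaSq X n ω := mul_pos hpos hc
    linarith
  have hzero : ∀ i ∈ Finset.range n, (X i ω - Sn X n ω / n) ^ 2 = 0 := by
    have := le_antisymm hsum (Finset.sum_nonneg (fun i _ => sq_nonneg _))
    exact (Finset.sum_eq_zero_iff_of_nonneg (fun i _ => sq_nonneg _)).mp this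
  have hval : ∀ i ∈ Finset.range n, X i ω = Sn X n ω / n := by
    intro i hi
    have := hzero i hi
    have := pow_eq_zero_iff (n := 2) (by norm_num) |>.mp this
    linarith
  have h0 : (0:ℕ) ∈ Finset.range n := Finset.mem_range.mpr (by omega)
  have h1 : (1:ℕ) ∈ Finset.range n := Finset.mem_range.mpr (by omega)
  show X 0 ω = X 1 ω
  rw [hval 0 h0, hval 1 h1]

/-- Theorem 4(ii) (Theorem `thm3`(ii)): if the common distribution `μ` of the i.i.d. `X_i`
is atomless and `E|T_n|^r < ∞`, then the concentration function satisfies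
`q(h) ≤ C·h^{r/n}` on `(0,1]` for some constant `C > 0`. -/
theorem concentration_le_of_lintegral_tstat_lt_top {Ω : Type*} [MeasurableSpace Ω]
    (P : Measure Ω) [IsProbabilityMeasure P]
    (X : ℕ → Ω → ℝ) (hmeas : ∀ i, Measurable (X i))
    (hindep : iIndepFun X P)
    (μ : Measure ℝ) (hdist : ∀ i, P.map (X i) = μ)
    (hcont : ∀ x : ℝ, μ {x} = 0)
    (n : ℕ) (hn : 2 ≤ n) (r : ℝ) (hr : 0 < r)
    (hfin : (∫⁻ ω, ENNReal.ofReal (|Tstat X n ω| ^ r) ∂P) < ⊤) :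
    ∃ C : ℝ, 0 < C ∧ ∀ h ∈ Set.Ioc (0 : ℝ) 1, ∀ x : ℝ,
      μ {y | |y - x| ≤ |x| * h} ≤ ENNReal.ofReal (C * h ^ (r / n)) := by
  have hn2 : (2:ℝ) ≤ (n:ℝ) := by exact_mod_cast hn
  have hnR : (0:ℝ) < (n:ℝ) := by linarith
  set M := ∫⁻ ω, ENNReal.ofReal (|Tstat X n ω| ^ r) ∂P with hMdef
  have hnull : P {ω | ¬ 0 < sigmaSq X n ω} = 0 :=
    measure_mono_null (sigmaSq_zero_subset X n hn) (eq_null P X hmeas hindep μ hdist hcont)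
  have hμprob : IsProbabilityMeasure μ := by
    rw [← hdist 0]; exact Measure.isProbabilityMeasure_map (hmeas 0).aemeasurable
  have hMt : (0:ℝ) ≤ M.toReal := ENNReal.toReal_nonneg
  set C0 : ℝ := (M.toReal + 1) ^ (1/(n:ℝ)) * 4 ^ (r/(n:ℝ)) + 2 ^ (r/(n:ℝ)) with hC0
  have hC0pos : 0 < C0 := by positivity
  refine ⟨C0, hC0pos, ?_⟩
  rintro h ⟨hh0, hh1⟩ x
  have hq : 0 < h ^ (r/(n:ℝ)) := Real.rpow_pos_of_pos hh0 _
  by_cases hx : x = 0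
  · have hset : {y : ℝ | |y - x| ≤ |x| * h} = {(0:ℝ)} := by
      subst hx; ext y
      simp only [Set.mem_setOf_eq, sub_zero, abs_zero, zero_mul, Set.mem_singleton_iff]
      constructor
      · intro hy; exact abs_nonpos_iff.mp hy
      · intro hy; simp [hy]
    rw [hset, hcont 0]
    exact zero_le
  by_cases hhalf : h ≤ 1/2
  · -- main case
    set B : Set ℝ := {y | |y - x| ≤ |x| * h} with hBdef
    have hBmeas : MeasurableSet B := by
      have : B = Metric.closedBall x (|x| * h) := by
        ext y; simp [hBdef, Metric.mem_closedBall, Real.dist_eq]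
      rw [this]; exact measurableSet_closedBall
    set T : Set Ω := {ω | 0 < sigmaSq X n ω} with hTdef
    have hTmeas : MeasurableSet T :=
      measurableSet_lt measurable_const (measurable_sigmaSq X hmeas n)
    set A : Set Ω := ⋂ i ∈ Finset.range n, X i ⁻¹' B with hAdef
    have hAmeas : MeasurableSet A :=
      MeasurableSet.biInter (Finset.range n : Finset ℕ).countable_toSet
        (fun i _ => (hmeas i) hBmeas)
    have hPA : P A = (μ B) ^ n := by
      rw [hAdef, hindep.measure_inter_preimage_eq_mul (Finset.range n) (fun i _ => hBmeas)]
      have hXi : ∀ i, P (X i ⁻¹' B) = μ B := fun i => by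
        rw [← hdist i, Measure.map_apply (hmeas i) hBmeas]
      simp only [hXi, Finset.prod_const, Finset.card_range]
    set c : ENNReal := ENNReal.ofReal ((1/(4*h)) ^ r) with hcdef
    have hpoint : ∀ ω, (A ∩ T).indicator (fun _ => c) ω
        ≤ ENNReal.ofReal (|Tstat X n ω| ^ r) := by
      intro ω
      by_cases hω : ω ∈ A ∩ T
      · rw [Set.indicator_of_mem hω]
        apply ENNReal.ofReal_le_ofReal
        apply Real.rpow_le_rpow (by positivity) _ hr.le
        have hωA : ∀ i ∈ Finset.range n, |X i ω - x| ≤ |x| * h := by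
          intro i hi
          have hm := hω.1
          rw [hAdef] at hm
          exact Set.mem_iInter₂.mp hm i hi
        exact tstat_lower X n hn ω x h hx hh0 hhalf hωA hω.2
      · rw [Set.indicator_of_notMem hω]; exact zero_le
    have hmain : c * P (A ∩ T) ≤ M := by
      calc c * P (A ∩ T) = ∫⁻ ω, (A ∩ T).indicator (fun _ => c) ω ∂P :=
            (lintegral_indicator_const (hAmeas.inter hTmeas) c).symm
        _ ≤ M := lintegral_mono hpoint
    have hPAle : P A ≤ P (A ∩ T) := by
      have hsub : A ⊆ (A ∩ T) ∪ {ω | ¬ 0 < sigmaSq X n ω} := by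
        intro ω hω
        by_cases hc2 : 0 < sigmaSq X n ω
        · exact Or.inl ⟨hω, hc2⟩
        · exact Or.inr hc2
      calc P A ≤ P ((A ∩ T) ∪ {ω | ¬ 0 < sigmaSq X n ω}) := measure_mono hsub
        _ ≤ P (A ∩ T) + P {ω | ¬ 0 < sigmaSq X n ω} := measure_union_le _ _
        _ = P (A ∩ T) := by rw [hnull, add_zero]
    have hkey : (μ B) ^ n ≤ ENNReal.ofReal ((4*h) ^ r) * M := by
      have h1 : ENNReal.ofReal ((4*h) ^ r) * c = 1 := by
        rw [hcdef, ← ENNReal.ofReal_mul (by positivity),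
          ← Real.mul_rpow (by positivity) (by positivity), mul_one_div,
          div_self (by positivity : (4*h : ℝ) ≠ 0), Real.one_rpow, ENNReal.ofReal_one]
      calc (μ B) ^ n = P A := hPA.symm
        _ ≤ P (A ∩ T) := hPAle
        _ = 1 * P (A ∩ T) := (one_mul _).symm
        _ = ENNReal.ofReal ((4*h) ^ r) * (c * P (A ∩ T)) := by
            rw [← h1, mul_assoc]
        _ ≤ ENNReal.ofReal ((4*h) ^ r) * M := mul_le_mul_right hmain _
    have hroot : μ B ≤ (ENNReal.ofReal ((4*h) ^ r) * M) ^ (1/(n:ℝ)) := by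
      have hrw : μ B = ((μ B) ^ n) ^ (1/(n:ℝ)) := by
        rw [← ENNReal.rpow_natCast, ← ENNReal.rpow_mul, mul_one_div,
          div_self (ne_of_gt hnR), ENNReal.rpow_one]
      rw [hrw]
      exact ENNReal.rpow_le_rpow hkey (by positivity)
    have hM1 : M ≤ ENNReal.ofReal (M.toReal + 1) := by
      conv_lhs => rw [← ENNReal.ofReal_toReal hfin.ne]
      exact ENNReal.ofReal_le_ofReal (by linarith)
    have hfinal : (ENNReal.ofReal ((4*h) ^ r) * M) ^ (1/(n:ℝ))
        ≤ ENNReal.ofReal (((4*h) ^ r * (M.toReal + 1)) ^ (1/(n:ℝ))) := by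
      calc (ENNReal.ofReal ((4*h) ^ r) * M) ^ (1/(n:ℝ))
          ≤ (ENNReal.ofReal ((4*h) ^ r) * ENNReal.ofReal (M.toReal + 1)) ^ (1/(n:ℝ)) :=
            ENNReal.rpow_le_rpow (mul_le_mul_right hM1 _) (by positivity)
        _ = (ENNReal.ofReal ((4*h) ^ r * (M.toReal + 1))) ^ (1/(n:ℝ)) := by
            rw [ENNReal.ofReal_mul (by positivity)]
        _ = ENNReal.ofReal (((4*h) ^ r * (M.toReal + 1)) ^ (1/(n:ℝ))) := by
            rw [ENNReal.ofReal_rpow_of_pos (by positivity)]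
    refine le_trans (hroot.trans hfinal) (ENNReal.ofReal_le_ofReal ?_)
    have e1 : ((4*h) ^ r * (M.toReal + 1)) ^ (1/(n:ℝ))
        = 4 ^ (r/(n:ℝ)) * h ^ (r/(n:ℝ)) * (M.toReal + 1) ^ (1/(n:ℝ)) := by
      rw [Real.mul_rpow (by positivity) (by positivity),
        ← Real.rpow_mul (by positivity : (0:ℝ) ≤ 4*h), mul_one_div,
        Real.mul_rpow (by norm_num) hh0.le]
    rw [e1, hC0]
    have h2a : (0:ℝ) ≤ 2 ^ (r/(n:ℝ)) * h ^ (r/(n:ℝ)) := by positivity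
    nlinarith [h2a]
  · -- h > 1/2
    push_neg at hhalf
    calc μ {y | |y - x| ≤ |x| * h} ≤ 1 := prob_le_one
      _ ≤ ENNReal.ofReal (C0 * h ^ (r/(n:ℝ))) := by
        rw [← ENNReal.ofReal_one]
        apply ENNReal.ofReal_le_ofReal
        have h1 : (1/2:ℝ) ^ (r/(n:ℝ)) ≤ h ^ (r/(n:ℝ)) :=
          Real.rpow_le_rpow (by norm_num) hhalf.le (by positivity)
        have h2 : (2:ℝ) ^ (r/(n:ℝ)) ≤ C0 := by
          have : (0:ℝ) ≤ (M.toReal + 1) ^ (1/(n:ℝ)) * 4 ^ (r/(n:ℝ)) := by positivity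
          rw [hC0]; linarith
        have h3 : (2:ℝ) ^ (r/(n:ℝ)) * (1/2:ℝ) ^ (r/(n:ℝ)) = 1 := by
          rw [← Real.mul_rpow (by norm_num) (by norm_num)]
          norm_num
        calc (1:ℝ) = 2 ^ (r/(n:ℝ)) * (1/2:ℝ) ^ (r/(n:ℝ)) := h3.symm
          _ ≤ C0 * h ^ (r/(n:ℝ)) :=
            mul_le_mul h2 h1 (Real.rpow_pos_of_pos (by norm_num) _).le hC0pos.le
end
end

section
/- Let X be a real random variable whose distribution is absolutely continuous with a bounded density function f, and suppose there exists N > 0 such that f(x_2) ≤ f(x_1) whenever N ≤ x_1 ≤ x_2 or −N ≥ x_1 ≥ x_2 (i.e., f is non-increasing on [N,∞) and non-decreasing on (−∞,−N]). Then q(h) = O(h): there exists a constant C such that q(h) ≤ C·h for all h ∈ (0, 1/2]. -/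
open MeasureTheory Filter

lemma upper_bound_aux (μ : Measure ℝ) (f : ℝ → ℝ)
    (hμ : μ = volume.withDensity fun x => ENNReal.ofReal (f x))
    (a b c : ℝ) (hc : 0 ≤ c) (hfc : ∀ y ∈ Set.Icc a b, f y ≤ c) :
    μ (Set.Icc a b) ≤ ENNReal.ofReal (c * (b - a)) := by
  rw [hμ, withDensity_apply _ measurableSet_Icc]
  calc ∫⁻ y in Set.Icc a b, ENNReal.ofReal (f y)
      ≤ ∫⁻ _ in Set.Icc a b, ENNReal.ofReal c :=
        setLIntegral_mono' measurableSet_Icc fun y hy =>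
          ENNReal.ofReal_le_ofReal (hfc y hy)
    _ = ENNReal.ofReal c * volume (Set.Icc a b) := by
        rw [setLIntegral_const]
    _ ≤ ENNReal.ofReal (c * (b - a)) := by
        rw [Real.volume_Icc, ENNReal.ofReal_mul hc]

lemma lower_bound_aux (μ : Measure ℝ) [IsProbabilityMeasure μ] (f : ℝ → ℝ)
    (hμ : μ = volume.withDensity fun x => ENNReal.ofReal (f x))
    (p q c : ℝ) (hc : 0 ≤ c) (hfc : ∀ y ∈ Set.Icc p q, c ≤ f y) :
    c * (q - p) ≤ 1 := by
  rcases le_or_gt q p with h | h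
  · nlinarith
  have key : ENNReal.ofReal (c * (q - p)) ≤ 1 := by
    calc ENNReal.ofReal (c * (q - p))
        = ENNReal.ofReal c * volume (Set.Icc p q) := by
          rw [Real.volume_Icc, ENNReal.ofReal_mul hc]
      _ = ∫⁻ _ in Set.Icc p q, ENNReal.ofReal c := by
          rw [setLIntegral_const]
      _ ≤ ∫⁻ y in Set.Icc p q, ENNReal.ofReal (f y) :=
          setLIntegral_mono' measurableSet_Icc fun y hy =>
            ENNReal.ofReal_le_ofReal (hfc y hy)
      _ = μ (Set.Icc p q) := by rw [hμ, withDensity_apply _ measurableSet_Icc]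
      _ ≤ μ Set.univ := measure_mono (Set.subset_univ _)
      _ = 1 := measure_univ
  rwa [ENNReal.ofReal_le_one] at key

/-- Proposition 1 (Proposition `prop4`): if `X` has an absolutely continuous distribution with
bounded density `f` which is non-increasing on `[N, ∞)` and non-decreasing on `(−∞, −N]` for
some `N > 0`, then the concentration function satisfies `q(h) = O(h)`: there is a constant `C`
with `q(h) ≤ C·h` for all `h ∈ (0, 1/2]`. -/
theorem concentration_le_of_monotone_density (μ : Measure ℝ) [IsProbabilityMeasure μ]
    (f : ℝ → ℝ) (hf0 : ∀ x, 0 ≤ f x)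
    (hμ : μ = volume.withDensity fun x => ENNReal.ofReal (f x))
    (M : ℝ) (hM : ∀ x, f x ≤ M)
    (N : ℝ) (hN : 0 < N)
    (hmono : ∀ x₁ x₂ : ℝ, (N ≤ x₁ ∧ x₁ ≤ x₂) ∨ (x₂ ≤ x₁ ∧ x₁ ≤ -N) → f x₂ ≤ f x₁) :
    ∃ C : ℝ, ∀ h ∈ Set.Ioc (0 : ℝ) (1 / 2), ∀ x : ℝ,
      μ {y | |y - x| ≤ |x| * h} ≤ ENNReal.ofReal (C * h) := by
  have hM0 : 0 ≤ M := le_trans (hf0 0) (hM 0)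
  refine ⟨8 * M * N + 8, ?_⟩
  rintro h ⟨hh0, hh2⟩ x
  have hset : {y : ℝ | |y - x| ≤ |x| * h} = Set.Icc (x - |x| * h) (x + |x| * h) := by
    ext y
    simp only [Set.mem_setOf_eq, Set.mem_Icc, abs_le]
    constructor <;> intro hy <;> constructor <;> linarith [hy.1, hy.2]
  rw [hset]
  rcases le_or_gt |x| (4 * N) with hx | hx
  · -- bounded case: use f ≤ M
    calc μ (Set.Icc (x - |x| * h) (x + |x| * h))
        ≤ ENNReal.ofReal (M * ((x + |x| * h) - (x - |x| * h))) :=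
          upper_bound_aux μ f hμ _ _ M hM0 fun y _ => hM y
      _ ≤ ENNReal.ofReal ((8 * M * N + 8) * h) := by
          apply ENNReal.ofReal_le_ofReal
          have : (x + |x| * h) - (x - |x| * h) = 2 * |x| * h := by ring
          rw [this]
          nlinarith [abs_nonneg x, mul_nonneg hM0 hh0.le,
            mul_le_mul_of_nonneg_left (mul_le_mul_of_nonneg_right hx hh0.le) hM0]
  · rcases le_or_gt 0 x with hx0 | hx0
    · -- x > 4N
      have hxx : |x| = x := abs_of_nonneg hx0
      rw [hxx] at hx ⊢
      set a := x - x * h with ha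
      have hxpos : 0 < x := by linarith
      have haN : x / 2 ≤ a := by nlinarith
      have hfa : f a ≤ 4 / x := by
        have hlow : ∀ y ∈ Set.Icc N a, f a ≤ f y := fun y hy =>
          hmono y a (Or.inl ⟨hy.1, hy.2⟩)
        have h1 : f a * (a - N) ≤ 1 := lower_bound_aux μ f hμ N a (f a) (hf0 a) hlow
        have haN4 : x / 4 ≤ a - N := by nlinarith
        rw [le_div_iff₀ hxpos]
        nlinarith [hf0 a, mul_le_mul_of_nonneg_left haN4 (hf0 a)]
      calc μ (Set.Icc (x - x * h) (x + x * h))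
          ≤ ENNReal.ofReal ((4 / x) * ((x + x * h) - (x - x * h))) := by
            apply upper_bound_aux μ f hμ _ _ _ (by positivity)
            intro y hy
            refine le_trans (hmono a y (Or.inl ⟨by nlinarith, hy.1⟩)) hfa
        _ ≤ ENNReal.ofReal ((8 * M * N + 8) * h) := by
            apply ENNReal.ofReal_le_ofReal
            have h4 : (4 / x) * ((x + x * h) - (x - x * h)) = 8 * h := by
              field_simp; ring
            rw [h4]; nlinarith [mul_nonneg (mul_nonneg hM0 hN.le) hh0.le]
    · -- x < -4N
      have hxx : |x| = -x := abs_of_neg hx0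
      rw [hxx] at hx ⊢
      set b := x - x * h with hb
      have hbN : b ≤ x / 2 := by nlinarith
      have hfb : f b ≤ 4 / (-x) := by
        have hlow : ∀ y ∈ Set.Icc b (-N), f b ≤ f y := fun y hy =>
          hmono y b (Or.inr ⟨hy.1, hy.2⟩)
        have h1 : f b * (-N - b) ≤ 1 := lower_bound_aux μ f hμ b (-N) (f b) (hf0 b) hlow
        have haN4 : -x / 4 ≤ -N - b := by nlinarith
        rw [le_div_iff₀ (by linarith : (0:ℝ) < -x)]
        nlinarith [hf0 b, mul_le_mul_of_nonneg_left haN4 (hf0 b)]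
      calc μ (Set.Icc (x - -x * h) (x + -x * h))
          ≤ ENNReal.ofReal ((4 / (-x)) * ((x + -x * h) - (x - -x * h))) := by
            apply upper_bound_aux μ f hμ _ _ _ (div_nonneg (by norm_num) (by linarith))
            intro y hy
            refine le_trans (hmono b y (Or.inr ⟨by rw [hb]; linarith [hy.2], by nlinarith⟩)) hfb
        _ ≤ ENNReal.ofReal ((8 * M * N + 8) * h) := by
            apply ENNReal.ofReal_le_ofReal
            have hxne : x ≠ 0 := by linarith
            have hxne' : -x ≠ 0 := by linarith
            have h4 : (4 / (-x)) * ((x + -x * h) - (x - -x * h)) = 8 * h := by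
              rw [show (x + -x * h) - (x - -x * h) = -x * (2 * h) by ring,
                div_mul_eq_mul_div, mul_comm (-x) (2 * h), ← mul_assoc,
                mul_div_assoc, div_self hxne']
              ring
            rw [h4]; nlinarith [mul_nonneg (mul_nonneg hM0 hN.le) hh0.le]
end

section
/- Let X have distribution F and fix r > 0. For integers n ≥ 2 and reals δ > 0 define R_{n,δ} = ∫_{x≠0} ∫_0^δ n^r · h^{−(r+1)} · ((P(|X − x| < h|x|))^{n−1} − p_x^{n−1}) dh dF(x), where p_x = P(X = x). If there exists an integer n_0 ≥ 2 such that R_{n,ε} < ∞ for every n ≥ n_0 and every ε > 0, then there exists δ > 0 such that lim_{n→∞} R_{n,δ} = 0. -/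
open MeasureTheory Filter Topology Set
open scoped ENNReal NNReal

noncomputable section

/-- `R_{n,δ} = ∫_{x≠0} ∫_0^δ n^r h^{−(r+1)} ((P(|X − x| < h|x|))^{n−1} − p_x^{n−1}) dh dF(x)`,
where `μ` is the distribution `F` of `X` and `p_x = μ {x}`. -/
def Rint (μ : Measure ℝ) (r : ℝ) (n : ℕ) (δ : ℝ) : ENNReal :=
  ∫⁻ x in {x : ℝ | x ≠ 0},
    ∫⁻ h in Set.Ioo (0 : ℝ) δ,
      ENNReal.ofReal ((n : ℝ) ^ r * h ^ (-(r + 1))) *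
        (μ {y | |y - x| < h * |x|} ^ (n - 1) - μ {x} ^ (n - 1)) ∂volume ∂μ

namespace RintAux



lemma pow_sub_pow_le (p q : ℝ≥0∞) (hpq : p ≤ q) (m : ℕ) :
    q ^ (m + 1) - p ^ (m + 1) ≤ (m + 1 : ℕ) * q ^ m * (q - p) := by
  induction m with
  | zero => simp
  | succ m ih =>
    have hple : p ^ (m + 1) ≤ q ^ (m + 1) := pow_le_pow_left₀ zero_le hpq _
    have h1 : q ^ (m + 2) - p * q ^ (m + 1) ≤ (q - p) * q ^ (m + 1) := by
      rw [tsub_le_iff_right]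
      have e : ((q - p) + p) * q ^ (m + 1) = (q - p) * q ^ (m + 1) + p * q ^ (m + 1) := by ring
      rw [← e, tsub_add_cancel_of_le hpq, pow_succ, mul_comm]
    have h2 : p * q ^ (m + 1) - p ^ (m + 2) ≤ p * (q ^ (m + 1) - p ^ (m + 1)) := by
      rw [tsub_le_iff_right]
      have e : p * ((q ^ (m + 1) - p ^ (m + 1)) + p ^ (m + 1))
          = p * (q ^ (m + 1) - p ^ (m + 1)) + p ^ (m + 2) := by ring
      rw [← e, tsub_add_cancel_of_le hple]
    calc q ^ (m + 2) - p ^ (m + 2)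
        ≤ (q ^ (m + 2) - p * q ^ (m + 1)) + (p * q ^ (m + 1) - p ^ (m + 2)) :=
          tsub_le_tsub_add_tsub
      _ ≤ (q - p) * q ^ (m + 1) + p * (q ^ (m + 1) - p ^ (m + 1)) := add_le_add h1 h2
      _ ≤ (q - p) * q ^ (m + 1) + q * ((m + 1 : ℕ) * q ^ m * (q - p)) :=
          add_le_add_right (mul_le_mul' hpq ih) _
      _ = (m + 1 + 1 : ℕ) * q ^ (m + 1) * (q - p) := by push_cast; ring

lemma le_pow_sub_pow (p q : ℝ≥0∞) (hpq : p ≤ q) (hq1 : q ≤ 1) (m : ℕ) :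
    (q - p) * q ^ m ≤ q ^ (m + 1) - p ^ (m + 1) := by
  have hptop : p ^ (m + 1) ≠ ⊤ :=
    ne_top_of_le_ne_top ENNReal.one_ne_top (pow_le_one' (hpq.trans hq1) _)
  apply ENNReal.le_sub_of_add_le_right hptop
  calc (q - p) * q ^ m + p ^ (m + 1)
      ≤ (q - p) * q ^ m + p * q ^ m := by
        gcongr
        calc p ^ (m + 1) = p * p ^ m := by ring
          _ ≤ p * q ^ m := mul_le_mul' le_rfl (pow_le_pow_left₀ zero_le hpq _)
    _ = ((q - p) + p) * q ^ m := by ring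
    _ = q * q ^ m := by rw [tsub_add_cancel_of_le hpq]
    _ = q ^ (m + 1) := by ring

lemma key_dom {p q Q : ℝ≥0∞} (hpq : p ≤ q) (hq1 : q ≤ 1) (hqQ : q ≤ Q) {n₀ n : ℕ}
    (hn₀ : 2 ≤ n₀) (hn : n₀ ≤ n) :
    q ^ (n - 1) - p ^ (n - 1) ≤ (n - 1 : ℕ) * Q ^ (n - n₀) * (q ^ (n₀ - 1) - p ^ (n₀ - 1)) := by
  have e1 : n - 1 = (n - 2) + 1 := by omega
  have e2 : n₀ - 1 = (n₀ - 2) + 1 := by omega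
  have e3 : n - 2 = (n - n₀) + (n₀ - 2) := by omega
  calc q ^ (n - 1) - p ^ (n - 1) ≤ (n - 1 : ℕ) * q ^ (n - 2) * (q - p) := by
        rw [e1]
        exact pow_sub_pow_le p q hpq (n - 2)
    _ ≤ (n - 1 : ℕ) * (Q ^ (n - n₀) * q ^ (n₀ - 2)) * (q - p) := by
        gcongr
        calc q ^ (n - 2) = q ^ (n - n₀) * q ^ (n₀ - 2) := by rw [← pow_add, ← e3]
          _ ≤ Q ^ (n - n₀) * q ^ (n₀ - 2) :=
            mul_le_mul' (pow_le_pow_left₀ zero_le hqQ _) le_rfl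
    _ = (n - 1 : ℕ) * Q ^ (n - n₀) * ((q - p) * q ^ (n₀ - 2)) := by ring
    _ ≤ (n - 1 : ℕ) * Q ^ (n - n₀) * (q ^ (n₀ - 1) - p ^ (n₀ - 1)) := by
        gcongr
        rw [e2]
        exact le_pow_sub_pow p q hpq hq1 _



def fnn (μ : Measure ℝ) (r : ℝ) (n : ℕ) : ℝ × ℝ → ℝ≥0∞ := fun p =>
  ENNReal.ofReal ((n : ℝ) ^ r * p.2 ^ (-(r + 1))) *
    (μ {y | |y - p.1| < p.2 * |p.1|} ^ (n - 1) - μ {p.1} ^ (n - 1))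

lemma meas_q (μ : Measure ℝ) [SFinite μ] :
    Measurable (fun p : ℝ × ℝ => μ {y : ℝ | |y - p.1| < p.2 * |p.1|}) := by
  have hs : MeasurableSet {q : (ℝ × ℝ) × ℝ | |q.2 - q.1.1| < q.1.2 * |q.1.1|} := by
    apply measurableSet_lt <;> fun_prop
  simpa using measurable_measure_prodMk_left (ν := μ) hs

lemma meas_atom (μ : Measure ℝ) [SFinite μ] : Measurable (fun x : ℝ => μ {x}) := by
  have hs : MeasurableSet {q : ℝ × ℝ | q.2 = q.1} :=
    measurableSet_eq_fun measurable_snd measurable_fst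
  have := measurable_measure_prodMk_left (ν := μ) hs
  simpa [Set.preimage, Set.setOf_eq_eq_singleton'] using this

lemma measurable_fnn (μ : Measure ℝ) [SFinite μ] (r : ℝ) (n : ℕ) : Measurable (fnn μ r n) := by
  apply Measurable.mul
  · apply Measurable.ennreal_ofReal
    fun_prop
  · exact ((meas_q μ).pow_const _).sub (((meas_atom μ).comp measurable_fst).pow_const _)

lemma g_tendsto (n₀ k : ℕ) {Q₀ : ℝ} (h0 : 0 ≤ Q₀) (h1 : Q₀ < 1) :
    Tendsto (fun m : ℕ => ((m + n₀ : ℕ) : ℝ) ^ k * Q₀ ^ m) atTop (𝓝 0) := by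
  apply squeeze_zero' (Eventually.of_forall fun m => by positivity)
    (g := fun m : ℕ => ((n₀ : ℝ) + 1) ^ k * ((m : ℝ) ^ k * Q₀ ^ m))
  · filter_upwards [eventually_ge_atTop 1] with m hm
    have hm1 : (1 : ℝ) ≤ (m : ℝ) := by exact_mod_cast hm
    have hbase : ((m + n₀ : ℕ) : ℝ) ≤ ((n₀ : ℝ) + 1) * m := by
      push_cast
      nlinarith [Nat.cast_nonneg (α := ℝ) n₀]
    calc ((m + n₀ : ℕ) : ℝ) ^ k * Q₀ ^ m ≤ (((n₀ : ℝ) + 1) * m) ^ k * Q₀ ^ m := by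
          apply mul_le_mul_of_nonneg_right _ (pow_nonneg h0 m)
          exact pow_le_pow_left₀ (Nat.cast_nonneg _) hbase k
      _ = ((n₀ : ℝ) + 1) ^ k * ((m : ℝ) ^ k * Q₀ ^ m) := by rw [mul_pow]; ring
  · have := (tendsto_pow_const_mul_const_pow_of_lt_one k h0 h1).const_mul (((n₀ : ℝ) + 1) ^ k)
    simpa using this



lemma exists_Q (μ : Measure ℝ) [IsProbabilityMeasure μ] (hdirac : ∀ a : ℝ, μ {a} ≠ 1) :
    ∃ δ : ℝ, 0 < δ ∧ ∃ Q : ℝ≥0∞, Q < 1 ∧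
      ∀ x : ℝ, x ≠ 0 → ∀ h : ℝ, 0 < h → h < δ → μ {y | |y - x| < h * |x|} ≤ Q := by
  classical
  set S : Set ℝ := {x : ℝ | ∀ ε : ℝ, 0 < ε → 0 < μ (Metric.ball x ε)} with hS
  have hSc : μ Sᶜ = 0 := by
    apply measure_null_of_locally_null
    intro x hx
    simp only [hS, mem_compl_iff, mem_setOf_eq, not_forall, not_lt, nonpos_iff_eq_zero] at hx
    obtain ⟨ε, hε, hμ⟩ := hx
    exact ⟨Metric.ball x ε, mem_nhdsWithin_of_mem_nhds (Metric.ball_mem_nhds x hε), hμ⟩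
  obtain ⟨a, b, haS, hbS, hab⟩ : ∃ a b, a ∈ S ∧ b ∈ S ∧ a ≠ b := by
    by_contra hcon
    push_neg at hcon
    rcases Set.eq_empty_or_nonempty S with hSe | ⟨a, haS⟩
    · rw [hSe, compl_empty, measure_univ] at hSc
      exact one_ne_zero hSc
    · have hSsub : S ⊆ {a} := fun y hy => by
        have := hcon y a hy haS
        simp [this]
      have hcompl : μ ({a}ᶜ) = 0 :=
        measure_mono_null (compl_subset_compl.mpr hSsub) hSc
      exact hdirac a ((prob_compl_eq_zero_iff (measurableSet_singleton a)).mp hcompl)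
  set d : ℝ := |a - b| with hd
  have hd0 : 0 < d := abs_pos.mpr (sub_ne_zero.mpr hab)
  set ρ : ℝ := d / 8 with hρdef
  have hρ : 0 < ρ := by positivity
  set η : ℝ≥0∞ := min (μ (Metric.ball a ρ)) (μ (Metric.ball b ρ)) with hηdef
  have hη : 0 < η := lt_min (haS ρ hρ) (hbS ρ hρ)
  refine ⟨min (1/2) (d / (8 * (|a| + ρ) + 1)), lt_min (by norm_num) (by positivity),
    1 - η, ENNReal.sub_lt_self ENNReal.one_ne_top one_ne_zero hη.ne', ?_⟩
  intro x hx h hh hhδ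
  set δ : ℝ := min (1/2) (d / (8 * (|a| + ρ) + 1)) with hδdef
  have hδle1 : δ ≤ 1/2 := min_le_left _ _
  have hδle2 : δ ≤ d / (8 * (|a| + ρ) + 1) := min_le_right _ _
  have hδ0 : 0 < δ := lt_min (by norm_num) (by positivity)
  have key : {y : ℝ | |y - x| < h * |x|} ∩ Metric.ball a ρ = ∅ ∨
      {y : ℝ | |y - x| < h * |x|} ∩ Metric.ball b ρ = ∅ := by
    by_contra hcc
    push_neg at hcc
    obtain ⟨hc1, hc2⟩ := hcc
    obtain ⟨u, hu1, hu2⟩ := hc1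
    obtain ⟨v, hv1, hv2⟩ := hc2
    rw [Metric.mem_ball, Real.dist_eq] at hu2 hv2
    simp only [mem_setOf_eq] at hu1 hv1
    have hx0 : 0 < |x| := abs_pos.mpr hx
    have hhx : h * |x| ≤ δ * |x| := by nlinarith
    have hxu : |x - u| < δ * |x| := by rw [abs_sub_comm]; linarith
    have hxv : |x - v| < δ * |x| := by rw [abs_sub_comm]; linarith
    have h2 : |x - a| < δ * |x| + ρ :=
      lt_of_le_of_lt (abs_sub_le x u a) (by linarith)
    have h3 : |x| ≤ 2 * (|a| + ρ) := by
      have habs := abs_sub_abs_le_abs_sub x a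
      nlinarith [abs_nonneg x]
    have h4 : d < 2 * ρ + 2 * (δ * |x|) := by
      have t1 := abs_sub_le a x b
      have t2 := abs_sub_le a u x
      have t3 := abs_sub_le x v b
      have hua : |a - u| = |u - a| := abs_sub_comm a u
      have hux : |u - x| = |x - u| := abs_sub_comm u x
      linarith
    have h5 : δ * (8 * (|a| + ρ) + 1) ≤ d := by
      rw [← le_div_iff₀ (by positivity)]
      exact hδle2
    nlinarith [hδ0.le]
  have hbound : ∀ c : ℝ, {y : ℝ | |y - x| < h * |x|} ∩ Metric.ball c ρ = ∅ →
      μ (Metric.ball c ρ) ≥ η → μ {y : ℝ | |y - x| < h * |x|} ≤ 1 - η := by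
    intro c hcempty hcη
    calc μ {y : ℝ | |y - x| < h * |x|} ≤ μ (Metric.ball c ρ)ᶜ := by
          apply measure_mono
          rw [subset_compl_iff_disjoint_right, disjoint_iff_inter_eq_empty]
          exact hcempty
      _ = 1 - μ (Metric.ball c ρ) := prob_compl_eq_one_sub Metric.isOpen_ball.measurableSet
      _ ≤ 1 - η := tsub_le_tsub_left hcη 1
  rcases key with hk | hk
  · exact hbound a hk (min_le_left _ _)
  · exact hbound b hk (min_le_right _ _)


lemma Rint_eq (μ : Measure ℝ) (r : ℝ) (n : ℕ) (δ : ℝ) :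
    Rint μ r n δ = ∫⁻ x in {x : ℝ | x ≠ 0}, ∫⁻ h in Set.Ioo (0 : ℝ) δ, fnn μ r n (x, h) ∂volume ∂μ :=
  rfl

end RintAux

open RintAux

/-- Lemma (Lemma `lem3`): if there is an `n₀ ≥ 2` such that `R_{n,ε} < ∞` for all `n ≥ n₀`
and all `ε > 0`, then there exists `δ > 0` with `lim_{n→∞} R_{n,δ} = 0`. -/
theorem exists_delta_Rint_tendsto_zero (μ : Measure ℝ) [IsProbabilityMeasure μ]
    (r : ℝ) (hr : 0 < r) (n₀ : ℕ) (hn₀ : 2 ≤ n₀)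
    (hfin : ∀ n, n₀ ≤ n → ∀ ε : ℝ, 0 < ε → Rint μ r n ε < ⊤) :
    ∃ δ : ℝ, 0 < δ ∧ Tendsto (fun n => Rint μ r n δ) atTop (𝓝 0) := by
  classical
  by_cases hdirac : ∃ a : ℝ, μ {a} = 1
  · -- Dirac-type case: the integrand vanishes a.e.
    obtain ⟨a, ha⟩ := hdirac
    have hzero : ∀ n : ℕ, Rint μ r n 1 = 0 := by
      intro n
      have hae : ∀ᵐ x ∂μ, x = a := by
        have hcompl : μ ({a}ᶜ) = 0 :=
          (prob_compl_eq_zero_iff (measurableSet_singleton a)).mpr ha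
        filter_upwards [measure_eq_zero_iff_ae_notMem.mp hcompl] with x hx
        simpa using hx
      have hae' : ∀ᵐ x ∂(μ.restrict {x : ℝ | x ≠ 0}), x = a := ae_restrict_of_ae hae
      rw [Rint, ← lintegral_zero (μ := μ.restrict {x : ℝ | x ≠ 0})]
      apply lintegral_congr_ae
      filter_upwards [hae', ae_restrict_mem ((isOpen_ne : IsOpen {x : ℝ | x ≠ 0}).measurableSet)]
        with x hxa hx0
      replace hx0 : x ≠ 0 := hx0
      rw [setLIntegral_congr_fun measurableSet_Ioo
        (fun h hh => ?_), lintegral_zero]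
      have hqp : μ {y : ℝ | |y - x| < h * |x|} = μ {x} := by
        have hxx : (0:ℝ) < h * |x| := mul_pos hh.1 (abs_pos.mpr hx0)
        have h1 : μ {x} = 1 := by rw [hxa]; exact ha
        have h2 : μ {y : ℝ | |y - x| < h * |x|} ≤ 1 := prob_le_one
        have h3 : μ {x} ≤ μ {y : ℝ | |y - x| < h * |x|} :=
          measure_mono (by simp [singleton_subset_iff, mem_setOf_eq, hxx])
        rw [h1] at h3 ⊢
        exact le_antisymm h2 h3
      rw [hqp, tsub_self, mul_zero]
    refine ⟨1, one_pos, ?_⟩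
    simp only [hzero]; exact (tendsto_const_nhds : Tendsto (fun _ : ℕ => (0:ℝ≥0∞)) atTop (𝓝 0))
  · -- general case
    push_neg at hdirac
    obtain ⟨δ, hδ0, Q, hQ1, hQbound⟩ := exists_Q μ hdirac
    refine ⟨δ, hδ0, ?_⟩
    rw [← tendsto_add_atTop_iff_nat n₀]
    have hQtop : Q ≠ ⊤ := ne_top_of_lt (hQ1.trans_le le_top)
    set Q₀ : ℝ := Q.toReal with hQ₀def
    have hQ₀0 : 0 ≤ Q₀ := ENNReal.toReal_nonneg
    have hQ₀1 : Q₀ < 1 := by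
      rw [hQ₀def, ← ENNReal.toReal_one]
      exact ENNReal.toReal_strict_mono ENNReal.one_ne_top hQ1
    have hQofReal : Q = ENNReal.ofReal Q₀ := (ENNReal.ofReal_toReal hQtop).symm
    set k : ℕ := ⌈r⌉₊ + 1 with hkdef
    have hgt := g_tendsto n₀ k hQ₀0 hQ₀1
    obtain ⟨B, hBub⟩ := hgt.bddAbove_range
    have hB : ∀ m : ℕ, ((m + n₀ : ℕ) : ℝ) ^ k * Q₀ ^ m ≤ B := fun m => hBub (Set.mem_range_self m)
    set K : ℝ≥0∞ := ENNReal.ofReal B with hKdef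
    have hKtop : K ≠ ⊤ := ENNReal.ofReal_ne_top
    have hnrk : ∀ n : ℕ, 1 ≤ n → ((n:ℝ)) ^ r ≤ (n:ℝ) ^ (⌈r⌉₊ : ℕ) := by
      intro n hn
      have h1n : (1:ℝ) ≤ (n:ℝ) := by exact_mod_cast hn
      calc ((n:ℝ)) ^ r ≤ (n:ℝ) ^ ((⌈r⌉₊ : ℕ) : ℝ) :=
            Real.rpow_le_rpow_of_exponent_le h1n (Nat.le_ceil r)
        _ = (n:ℝ) ^ (⌈r⌉₊ : ℕ) := Real.rpow_natCast _ _
    have hnrk' : ∀ n : ℕ, 1 ≤ n → ((n:ℝ)) ^ r ≤ (n:ℝ) ^ k := by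
      intro n hn
      have h1n : (1:ℝ) ≤ (n:ℝ) := by exact_mod_cast hn
      refine (hnrk n hn).trans ?_
      rw [hkdef, pow_succ]
      nlinarith [pow_nonneg (by linarith : (0:ℝ) ≤ (n:ℝ)) (⌈r⌉₊ : ℕ),
        one_le_pow₀ h1n (n := (⌈r⌉₊ : ℕ))]
    have hsplit : ∀ (j : ℕ) (x h : ℝ), fnn μ r j (x, h) = ENNReal.ofReal ((j:ℝ) ^ r) *
        (ENNReal.ofReal (h ^ (-(r + 1))) *
          (μ {y | |y - x| < h * |x|} ^ (j - 1) - μ {x} ^ (j - 1))) := by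
      intro j x h
      rw [fnn]
      dsimp only
      rw [ENNReal.ofReal_mul (Real.rpow_nonneg (Nat.cast_nonneg j) r), mul_assoc]
    have hfn_le : ∀ m : ℕ, ∀ x : ℝ, x ≠ 0 → ∀ h : ℝ, h ∈ Set.Ioo (0:ℝ) δ →
        fnn μ r (m + n₀) (x, h) ≤ K * fnn μ r n₀ (x, h) := by
      intro m x hx h hh
      set n : ℕ := m + n₀ with hndef
      have hn : n₀ ≤ n := by omega
      have hn1 : 1 ≤ n := by omega
      set q : ℝ≥0∞ := μ {y | |y - x| < h * |x|} with hqdef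
      set p : ℝ≥0∞ := μ {x} with hpdef
      have hhx : (0:ℝ) < h * |x| := mul_pos hh.1 (abs_pos.mpr hx)
      have hpq : p ≤ q := measure_mono (by simp [singleton_subset_iff, hhx])
      have hq1 : q ≤ 1 := prob_le_one
      have hqQ : q ≤ Q := hQbound x hx h hh.1 hh.2
      have hD := key_dom hpq hq1 hqQ hn₀ hn
      have hsc : ENNReal.ofReal ((n:ℝ) ^ r) * ((n - 1 : ℕ) : ℝ≥0∞) * Q ^ (n - n₀) ≤ K := by
        rw [hQofReal, ← ENNReal.ofReal_pow hQ₀0, ← ENNReal.ofReal_natCast,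
          ← ENNReal.ofReal_mul (Real.rpow_nonneg (Nat.cast_nonneg n) r),
          ← ENNReal.ofReal_mul (by positivity)]
        apply ENNReal.ofReal_le_ofReal
        have h1 : (n:ℝ) ^ r * ((n - 1 : ℕ) : ℝ) ≤ (n:ℝ) ^ k := by
          have h2 : ((n - 1 : ℕ) : ℝ) ≤ (n : ℝ) := by exact_mod_cast Nat.sub_le n 1
          have h3 := hnrk n hn1
          calc (n:ℝ) ^ r * ((n - 1 : ℕ) : ℝ) ≤ (n:ℝ) ^ (⌈r⌉₊ : ℕ) * (n:ℝ) :=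
                mul_le_mul h3 h2 (Nat.cast_nonneg _) (by positivity)
            _ = (n:ℝ) ^ k := by rw [hkdef, pow_succ]
        calc (n:ℝ) ^ r * ((n - 1 : ℕ) : ℝ) * Q₀ ^ (n - n₀)
            ≤ (n:ℝ) ^ k * Q₀ ^ (n - n₀) :=
              mul_le_mul_of_nonneg_right h1 (pow_nonneg hQ₀0 _)
          _ ≤ B := by
              have := hB (n - n₀)
              rwa [Nat.sub_add_cancel hn] at this
      have hone : (1:ℝ≥0∞) ≤ ENNReal.ofReal ((n₀:ℝ) ^ r) := by
        have : (1:ℝ≥0∞) = ENNReal.ofReal 1 := by simp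
        rw [this]
        apply ENNReal.ofReal_le_ofReal
        exact Real.one_le_rpow (by exact_mod_cast (by omega : 1 ≤ n₀)) hr.le
      calc fnn μ r n (x, h)
          = ENNReal.ofReal ((n:ℝ) ^ r) *
              (ENNReal.ofReal (h ^ (-(r + 1))) * (q ^ (n-1) - p ^ (n-1))) := hsplit n x h
        _ ≤ ENNReal.ofReal ((n:ℝ) ^ r) * (ENNReal.ofReal (h ^ (-(r + 1))) *
              (((n - 1 : ℕ) : ℝ≥0∞) * Q ^ (n - n₀) * (q ^ (n₀-1) - p ^ (n₀-1)))) :=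
            mul_le_mul_right (mul_le_mul_right hD _) _
        _ = (ENNReal.ofReal ((n:ℝ) ^ r) * ((n - 1 : ℕ) : ℝ≥0∞) * Q ^ (n - n₀)) *
              (ENNReal.ofReal (h ^ (-(r + 1))) * (q ^ (n₀-1) - p ^ (n₀-1))) := by ring
        _ ≤ K * (ENNReal.ofReal (h ^ (-(r + 1))) * (q ^ (n₀-1) - p ^ (n₀-1))) :=
            mul_le_mul_left hsc _
        _ ≤ K * (ENNReal.ofReal ((n₀:ℝ) ^ r) *
              (ENNReal.ofReal (h ^ (-(r + 1))) * (q ^ (n₀-1) - p ^ (n₀-1)))) :=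
            mul_le_mul_right (le_mul_of_one_le_left' hone) K
        _ = K * fnn μ r n₀ (x, h) := by rw [hsplit n₀ x h]
    have hfn_lim : ∀ x : ℝ, x ≠ 0 → ∀ h : ℝ, h ∈ Set.Ioo (0:ℝ) δ →
        Tendsto (fun m => fnn μ r (m + n₀) (x, h)) atTop (𝓝 0) := by
      intro x hx h hh
      have hub : ∀ m : ℕ, fnn μ r (m + n₀) (x, h) ≤
          ENNReal.ofReal (h ^ (-(r + 1))) * ENNReal.ofReal (((m + n₀ : ℕ):ℝ) ^ k * Q₀ ^ m) := by
        intro m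
        set n : ℕ := m + n₀ with hndef
        have hn1 : 1 ≤ n := by omega
        set q : ℝ≥0∞ := μ {y | |y - x| < h * |x|} with hqdef
        have hqQ : q ≤ Q := hQbound x hx h hh.1 hh.2
        have hD : q ^ (n-1) - μ {x} ^ (n-1) ≤ Q ^ (n-1) :=
          tsub_le_self.trans (pow_le_pow_left₀ zero_le hqQ _)
        calc fnn μ r n (x, h)
            = ENNReal.ofReal ((n:ℝ) ^ r) *
              (ENNReal.ofReal (h ^ (-(r + 1))) * (q ^ (n-1) - μ {x} ^ (n-1))) := hsplit n x h
          _ ≤ ENNReal.ofReal ((n:ℝ) ^ r) *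
              (ENNReal.ofReal (h ^ (-(r + 1))) * Q ^ (n-1)) :=
              mul_le_mul_right (mul_le_mul_right hD _) _
          _ = ENNReal.ofReal (h ^ (-(r + 1))) * (ENNReal.ofReal ((n:ℝ) ^ r) * Q ^ (n-1)) := by
              ring
          _ ≤ ENNReal.ofReal (h ^ (-(r + 1))) * ENNReal.ofReal (((n:ℕ):ℝ) ^ k * Q₀ ^ m) := by
              apply mul_le_mul_right
              rw [hQofReal, ← ENNReal.ofReal_pow hQ₀0,
                ← ENNReal.ofReal_mul (Real.rpow_nonneg (Nat.cast_nonneg n) r)]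
              apply ENNReal.ofReal_le_ofReal
              apply mul_le_mul (hnrk' n hn1)
                (pow_le_pow_of_le_one hQ₀0 hQ₀1.le (by omega)) (pow_nonneg hQ₀0 _)
                (by positivity)
      have h1 : Tendsto (fun m : ℕ => ENNReal.ofReal (((m + n₀ : ℕ):ℝ) ^ k * Q₀ ^ m))
          atTop (𝓝 0) := by
        have := ENNReal.tendsto_ofReal hgt
        simpa using this
      have h2 := ENNReal.Tendsto.const_mul h1 (Or.inr (ENNReal.ofReal_ne_top (r := h ^ (-(r + 1)))))
      rw [mul_zero] at h2
      exact tendsto_of_tendsto_of_tendsto_of_le_of_le tendsto_const_nhds h2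
        (fun m => zero_le) hub
    set In : ℕ → ℝ → ℝ≥0∞ := fun n x => ∫⁻ h in Set.Ioo (0:ℝ) δ, fnn μ r n (x, h) with hIndef
    have hIn_meas : ∀ n, Measurable (In n) := fun n =>
      (measurable_fnn μ r n).lintegral_prod_right'
    have hRint_eq : ∀ n, Rint μ r n δ = ∫⁻ x in {x : ℝ | x ≠ 0}, In n x ∂μ := fun n => rfl
    have hRfin : Rint μ r n₀ δ ≠ ⊤ := (hfin n₀ le_rfl δ hδ0).ne
    have hfnx_meas : ∀ (n : ℕ) (x : ℝ), Measurable fun h => fnn μ r n (x, h) := fun n x =>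
      (measurable_fnn μ r n).comp measurable_prodMk_left
    have hbound_int : ∀ m : ℕ, ∀ x : ℝ, x ≠ 0 → In (m + n₀) x ≤ K * In n₀ x := by
      intro m x hx
      calc In (m + n₀) x ≤ ∫⁻ h in Set.Ioo (0:ℝ) δ, K * fnn μ r n₀ (x, h) := by
            apply lintegral_mono_ae
            filter_upwards [ae_restrict_mem measurableSet_Ioo] with h hh
            exact hfn_le m x hx h hh
        _ = K * In n₀ x := lintegral_const_mul K (hfnx_meas n₀ x)
    have hInner : ∀ x : ℝ, x ≠ 0 → In n₀ x ≠ ⊤ →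
        Tendsto (fun m => In (m + n₀) x) atTop (𝓝 0) := by
      intro x hx hfx
      have := tendsto_lintegral_of_dominated_convergence
        (μ := volume.restrict (Set.Ioo (0:ℝ) δ))
        (F := fun m h => fnn μ r (m + n₀) (x, h)) (f := fun _ => 0)
        (bound := fun h => K * fnn μ r n₀ (x, h))
        (fun m => hfnx_meas (m + n₀) x)
        (fun m => by
          filter_upwards [ae_restrict_mem measurableSet_Ioo] with h hh
          exact hfn_le m x hx h hh)
        (by
          rw [lintegral_const_mul K (hfnx_meas n₀ x)]
          exact ENNReal.mul_ne_top hKtop hfx)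
        (by
          filter_upwards [ae_restrict_mem measurableSet_Ioo] with h hh
          exact hfn_lim x hx h hh)
      simpa using this
    have hae_mem : ∀ᵐ x ∂(μ.restrict {x : ℝ | x ≠ 0}), x ∈ {x : ℝ | x ≠ 0} :=
      ae_restrict_mem ((isOpen_ne : IsOpen {x : ℝ | x ≠ 0}).measurableSet)
    have hae_fin : ∀ᵐ x ∂(μ.restrict {x : ℝ | x ≠ 0}), In n₀ x < ⊤ :=
      ae_lt_top (hIn_meas n₀) ((hRint_eq n₀) ▸ hRfin)
    have hT := tendsto_lintegral_of_dominated_convergence (μ := μ.restrict {x : ℝ | x ≠ 0})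
      (F := fun m x => In (m + n₀) x) (f := fun _ => 0) (bound := fun x => K * In n₀ x)
      (fun m => hIn_meas (m + n₀))
      (fun m => by filter_upwards [hae_mem] with x hx; exact hbound_int m x hx)
      (by rw [lintegral_const_mul K (hIn_meas n₀)]; exact ENNReal.mul_ne_top hKtop hRfin)
      (by filter_upwards [hae_mem, hae_fin] with x hx hfx; exact hInner x hx hfx.ne)
    simpa [hRint_eq] using hT

end
end
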